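/- In the group S₃^ℤ with presentation ⟨σ₁, σ₂ ∣ σ₁σ₂σ₁ = σ₂σ₁σ₂, σ₁² = σ₂²⟩, the center equals the cyclic subgroup generated by the element σ₁². -/

import Mathlib

/-- Relators of the group `S₃^ℤ`: `σ₁σ₂σ₁σ₂⁻¹σ₁⁻¹σ₂⁻¹` and `σ₁²σ₂⁻²`. -/
def S3ZRels : Set (FreeGroup (Fin 2)) :=
  { FreeGroup.of 0 * FreeGroup.of 1 * FreeGroup.of 0 *
      (FreeGroup.of 1)⁻¹ * (FreeGroup.of 0)⁻¹ * (FreeGroup.of 1)⁻¹,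
    FreeGroup.of 0 ^ 2 * (FreeGroup.of 1 ^ 2)⁻¹ }

namespace S3Zaux

abbrev G := PresentedGroup S3ZRels
abbrev a : G := PresentedGroup.of 0
abbrev b : G := PresentedGroup.of 1
abbrev z : G := a ^ 2

lemma hmk : ∀ r ∈ S3ZRels, (QuotientGroup.mk r : G) = 1 := fun r hr =>
  (QuotientGroup.eq_one_iff r).mpr (Subgroup.subset_normalClosure hr)

lemma haba : a * b * a = b * a * b := by
  have h := hmk _ (Or.inl rfl)
  have h' : a * b * a * b⁻¹ * a⁻¹ * b⁻¹ = 1 := h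
  rw [← mul_inv_eq_one, ← h']; group

lemma hab2 : a ^ 2 = b ^ 2 := by
  have h := hmk _ (Or.inr rfl)
  have h' : a ^ 2 * (b ^ 2)⁻¹ = 1 := h
  rw [← mul_inv_eq_one, ← h']

lemma hzaa : z = a * a := sq a

lemma hzbb : z = b * b := by rw [show (z : G) = a ^ 2 from rfl, hab2, sq]

lemma hza : z * a = a * z := by rw [← pow_succ, ← pow_succ']

lemma hzb : z * b = b * z := by rw [hzbb, mul_assoc, ← mul_assoc]

lemma z_comm (g : G) : z * g = g * z := by
  have : g ∈ Subgroup.centralizer ({z} : Set G) := by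
    apply PresentedGroup.generated_by
    intro j
    rw [Subgroup.mem_centralizer_iff]
    rintro x rfl
    fin_cases j
    · exact hza
    · exact hzb
  exact Subgroup.mem_centralizer_iff.mp this z rfl

def Reps : Set G := {1, a, b, a * b, b * a, a * b * a}

lemma ainv : a⁻¹ = z⁻¹ * a := by
  rw [hzaa, mul_inv_rev, mul_assoc, inv_mul_cancel, mul_one]

lemma binv : b⁻¹ = z⁻¹ * b := by
  rw [hzbb, mul_inv_rev, mul_assoc, inv_mul_cancel, mul_one]

/-- decomposition predicate -/
def P (g : G) : Prop := ∃ (k : ℤ) (w : G), w ∈ Reps ∧ g = z ^ k * w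

lemma shift1 (k : ℤ) {w w' s : G} (h : w * s = z * w') :
    z ^ k * w * s = z ^ (k + 1) * w' := by
  rw [mul_assoc, h, zpow_add_one, mul_assoc]

lemma shift0 (k : ℤ) {w w' s : G} (h : w * s = w') :
    z ^ k * w * s = z ^ k * w' := by rw [mul_assoc, h]

lemma P_mul_a {g : G} (h : P g) : P (g * a) := by
  obtain ⟨k, w, hw, rfl⟩ := h
  rcases hw with rfl | rfl | rfl | rfl | rfl | rfl
  · exact ⟨k, a, by simp [Reps], shift0 k (one_mul a)⟩
  · exact ⟨k + 1, 1, by simp [Reps], shift1 k (by rw [mul_one]; exact hzaa.symm)⟩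
  · exact ⟨k, b * a, by simp [Reps], shift0 k rfl⟩
  · exact ⟨k, a * b * a, by simp [Reps], shift0 k rfl⟩
  · refine ⟨k + 1, b, by simp [Reps], shift1 k ?_⟩
    rw [mul_assoc, ← hzaa, ← z_comm]
  · refine ⟨k + 1, a * b, by simp [Reps], shift1 k ?_⟩
    rw [mul_assoc (a * b), ← hzaa, ← z_comm]

lemma P_mul_b {g : G} (h : P g) : P (g * b) := by
  obtain ⟨k, w, hw, rfl⟩ := h
  rcases hw with rfl | rfl | rfl | rfl | rfl | rfl
  · exact ⟨k, b, by simp [Reps], shift0 k (one_mul b)⟩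
  · exact ⟨k, a * b, by simp [Reps], shift0 k rfl⟩
  · exact ⟨k + 1, 1, by simp [Reps], shift1 k (by rw [mul_one]; exact hzbb.symm)⟩
  · refine ⟨k + 1, a, by simp [Reps], shift1 k ?_⟩
    rw [mul_assoc, ← hzbb, ← z_comm]
  · exact ⟨k, a * b * a, by simp [Reps], shift0 k haba.symm⟩
  · refine ⟨k + 1, b * a, by simp [Reps], shift1 k ?_⟩
    rw [haba, mul_assoc (b * a), ← hzbb, ← z_comm]

lemma P_mul_inv {g s : G} (hs : s⁻¹ = z⁻¹ * s) (h : P (g * s)) : P (g * s⁻¹) := by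
  obtain ⟨k, w, hw, hg⟩ := h
  have hc : Commute z g := z_comm g
  refine ⟨k - 1, w, hw, ?_⟩
  calc g * s⁻¹ = g * (z⁻¹ * s) := by rw [hs]
    _ = g * z⁻¹ * s := by rw [mul_assoc]
    _ = z⁻¹ * (g * s) := by rw [← hc.inv_left.eq, mul_assoc]
    _ = z⁻¹ * (z ^ k * w) := by rw [hg]
    _ = z ^ (k - 1) * w := by
        rw [← zpow_neg_one, ← mul_assoc, ← zpow_add, neg_add_eq_sub]

lemma P_mk (L : List (Fin 2 × Bool)) : P (PresentedGroup.mk S3ZRels (FreeGroup.mk L)) := by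
  induction L using List.reverseRecOn with
  | nil => exact ⟨0, 1, by simp [Reps], by simp [← FreeGroup.one_eq_mk]⟩
  | append_singleton L p ih =>
    obtain ⟨i, bb⟩ := p
    rw [← FreeGroup.mul_mk, map_mul]
    cases bb
    · have h1 : FreeGroup.mk [(i, false)] = (FreeGroup.of i)⁻¹ := by
        rw [show FreeGroup.of i = FreeGroup.mk [(i, true)] from rfl, FreeGroup.inv_mk]
        simp [FreeGroup.invRev]
      rw [h1, map_inv]
      fin_cases i
      · exact P_mul_inv ainv (P_mul_a ih)
      · exact P_mul_inv binv (P_mul_b ih)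
    · have h1 : FreeGroup.mk [(i, true)] = FreeGroup.of i := rfl
      rw [h1]
      fin_cases i
      · exact P_mul_a ih
      · exact P_mul_b ih

lemma P_all (g : G) : P g := by
  induction g using PresentedGroup.induction_on with
  | _ x => rw [← FreeGroup.mk_toWord (x := x)]; exact P_mk x.toWord

end S3Zaux

namespace S3Zaux

def f : Fin 2 → Equiv.Perm (Fin 3) := ![Equiv.swap 0 1, Equiv.swap 1 2]

lemma hf : ∀ r ∈ S3ZRels, FreeGroup.lift f r = 1 := by
  rintro r (rfl | rfl) <;>
    · simp only [map_mul, map_inv, map_pow, FreeGroup.lift_apply_of]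
      decide

def φ : G →* Equiv.Perm (Fin 3) := PresentedGroup.toGroup hf

lemma φa : φ a = Equiv.swap 0 1 := PresentedGroup.toGroup.of hf
lemma φb : φ b = Equiv.swap 1 2 := PresentedGroup.toGroup.of hf

lemma φz : φ z = 1 := by
  rw [show (z : G) = a ^ 2 from rfl, map_pow, φa]
  decide

theorem main :
    Subgroup.center (PresentedGroup S3ZRels) =
      Subgroup.zpowers ((PresentedGroup.of 0 : PresentedGroup S3ZRels) ^ 2) := by
  apply le_antisymm
  · intro g hg
    have hg' := Subgroup.mem_center_iff.mp hg
    obtain ⟨k, w, hw, rfl⟩ := P_all g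
    have hφ : φ (z ^ k * w) = φ w := by
      rw [map_mul, map_zpow, φz, one_zpow, one_mul]
    have h1 : Equiv.swap 0 1 * φ w = φ w * Equiv.swap 0 1 := by
      have := congrArg φ (hg' a)
      simpa only [map_mul, map_zpow, φz, φa, one_zpow, one_mul] using this
    have h2 : Equiv.swap 1 2 * φ w = φ w * Equiv.swap 1 2 := by
      have := congrArg φ (hg' b)
      simpa only [map_mul, map_zpow, φz, φb, one_zpow, one_mul] using this
    rcases hw with rfl | rfl | rfl | rfl | rfl | rfl
    · exact ⟨k, by rw [mul_one]⟩
    · rw [φa] at h2; exact absurd h2 (by decide)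
    · rw [φb] at h1; exact absurd h1 (by decide)
    · rw [map_mul, φa, φb] at h1; exact absurd h1 (by decide)
    · rw [map_mul, φa, φb] at h1; exact absurd h1 (by decide)
    · rw [map_mul, map_mul, φa, φb] at h1; exact absurd h1 (by decide)
  · rw [Subgroup.zpowers_le]
    exact Subgroup.mem_center_iff.mpr fun g => (z_comm g).symm

end S3Zaux

theorem stmt_9 :
    Subgroup.center (PresentedGroup S3ZRels) =
      Subgroup.zpowers ((PresentedGroup.of 0 : PresentedGroup S3ZRels) ^ 2) := by
  exact S3Zaux.main
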